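/- Let P(λ) = λ(J₁+R₁) + (J₂+R₂) be an n×n complex posH pencil, let k ≥ 2, and suppose the vectors x₁, …, x_k ∈ ℂⁿ form a Jordan chain of length k of P(λ) associated with the eigenvalue ∞, i.e., (J₁+R₁)x₁ = 0, (J₁+R₁)x_{i+1} = (J₂+R₂)x_i for i = 1, …, k−1, and (J₂+R₂)x_k ≠ 0. Let κ = ⌊(k+1)/2⌋. Then R₁x_j = 0 for j = 1, …, κ, and R₂x_j = 0 for j = 1, …, κ−1; moreover, if k = 2κ is even, then also R₂x_κ = 0. -/
import Mathlib


open Matrix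
open scoped ComplexOrder

/-- Theorem 3.10: if `(x 1, …, x k)` is a Jordan chain of length `k ≥ 2` of the
posH pencil `P(λ) = λ(J₁+R₁) + (J₂+R₂)` associated with the eigenvalue `∞` and
`κ = ⌊(k+1)/2⌋`, then `x 1, …, x κ ∈ ker R₁`, `x 1, …, x (κ-1) ∈ ker R₂`, and if
`k = 2κ` is even then also `x κ ∈ ker R₂`. -/
theorem posH_infinite_jordan_chain {n : ℕ}
    (J₁ J₂ R₁ R₂ : Matrix (Fin n) (Fin n) ℂ)
    (hJ₁ : J₁ᴴ = -J₁) (hJ₂ : J₂ᴴ = -J₂)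
    (hR₁ : R₁.PosSemidef) (hR₂ : R₂.PosSemidef)
    (k : ℕ) (hk : 2 ≤ k) (x : ℕ → (Fin n → ℂ))
    (hfirst : (J₁ + R₁) *ᵥ x 1 = 0)
    (hchain : ∀ i, 1 ≤ i → i ≤ k - 1 → (J₁ + R₁) *ᵥ x (i + 1) = (J₂ + R₂) *ᵥ x i)
    (hlast : (J₂ + R₂) *ᵥ x k ≠ 0) :
    (∀ j, 1 ≤ j → j ≤ (k + 1) / 2 → R₁ *ᵥ x j = 0) ∧
    (∀ j, 1 ≤ j → j ≤ (k + 1) / 2 - 1 → R₂ *ᵥ x j = 0) ∧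
    (k = 2 * ((k + 1) / 2) → R₂ *ᵥ x ((k + 1) / 2) = 0) := by
  set A := J₁ + R₁ with hA
  set B := J₂ + R₂ with hB
  -- moving a matrix to the other side of the inner product
  have hmove : ∀ (M : Matrix (Fin n) (Fin n) ℂ) (u v : Fin n → ℂ),
      star u ⬝ᵥ (M *ᵥ v) = star (Mᴴ *ᵥ u) ⬝ᵥ v := by
    intro M u v
    rw [star_mulVec, conjTranspose_conjTranspose, ← dotProduct_mulVec]
  -- conjugation formula
  have hconj : ∀ (M : Matrix (Fin n) (Fin n) ℂ) (u v : Fin n → ℂ),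
      star (star v ⬝ᵥ (M *ᵥ u)) = star u ⬝ᵥ (Mᴴ *ᵥ v) := by
    intro M u v
    rw [← star_dotProduct, star_mulVec, ← dotProduct_mulVec]
  -- adjoint of A on ker R₁ vectors
  have hAstar : ∀ u : Fin n → ℂ, R₁ *ᵥ u = 0 → Aᴴ *ᵥ u = -(A *ᵥ u) := by
    intro u hu
    have : Aᴴ = -J₁ + R₁ := by
      rw [hA, conjTranspose_add, hJ₁, hR₁.isHermitian.eq]
    rw [this, hA, add_mulVec, add_mulVec, hu, neg_mulVec]
    simp
  have hBstar : ∀ u : Fin n → ℂ, R₂ *ᵥ u = 0 → Bᴴ *ᵥ u = -(B *ᵥ u) := by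
    intro u hu
    have : Bᴴ = -J₂ + R₂ := by
      rw [hB, conjTranspose_add, hJ₂, hR₂.isHermitian.eq]
    rw [this, hB, add_mulVec, add_mulVec, hu, neg_mulVec]
    simp
  -- the quadratic form identity: q + conj q' = 2 (u, R v)
  have hquad : ∀ (J R : Matrix (Fin n) (Fin n) ℂ), Jᴴ = -J → Rᴴ = R →
      ∀ u v : Fin n → ℂ,
      star u ⬝ᵥ ((J + R) *ᵥ v) + star (star v ⬝ᵥ ((J + R) *ᵥ u)) =
        2 * (star u ⬝ᵥ (R *ᵥ v)) := by
    intro J R hJ hR u v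
    rw [hconj, conjTranspose_add, hJ, hR]
    simp only [add_mulVec, neg_mulVec, dotProduct_add, dotProduct_neg]
    ring
  -- the shift lemma
  have shift : ∀ j : ℕ, 1 ≤ j →
      (∀ j', 1 ≤ j' → j' ≤ j → R₁ *ᵥ x j' = 0) →
      (∀ j', 1 ≤ j' → j' + 1 ≤ j → R₂ *ᵥ x j' = 0) →
      ∀ i, 1 ≤ i → i + j ≤ k → star (x j) ⬝ᵥ (B *ᵥ x i) = 0 := by
    intro j
    induction j with
    | zero => intro h; omega
    | succ j ih =>
      intro _ h1 h2 i hi hij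
      have hBA : B *ᵥ x i = A *ᵥ x (i + 1) := (hchain i hi (by omega)).symm
      rw [hBA, hmove]
      rcases Nat.eq_zero_or_pos j with hj0 | hj1
      · -- j + 1 = 1 : base case
        subst hj0
        have hA1 : Aᴴ *ᵥ x 1 = 0 := by
          rw [hAstar (x 1) (h1 1 le_rfl le_rfl), hfirst, neg_zero]
        rw [hA1]
        simp
      · -- inductive step
        have hR1j1 : R₁ *ᵥ x (j + 1) = 0 := h1 (j + 1) (by omega) le_rfl
        rw [hAstar _ hR1j1]
        have hAB : A *ᵥ x (j + 1) = B *ᵥ x j := hchain j hj1 (by omega)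
        have hb : B *ᵥ x j = -(Bᴴ *ᵥ x j) := by
          rw [hBstar _ (h2 j hj1 le_rfl), neg_neg]
        rw [hAB, hb, neg_neg, ← hmove]
        exact ih hj1 (fun j' a b => h1 j' a (by omega))
          (fun j' a b => h2 j' a (by omega)) (i + 1) (by omega) (by omega)
  -- main induction
  have key : ∀ m : ℕ, 1 ≤ m → 2 * m ≤ k + 1 →
      (∀ j, 1 ≤ j → j ≤ m → R₁ *ᵥ x j = 0) ∧
      (∀ j, 1 ≤ j → j + 1 ≤ m → R₂ *ᵥ x j = 0) := by
    intro m
    induction m with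
    | zero => intro h; omega
    | succ m ih =>
      intro _ hm
      rcases Nat.eq_zero_or_pos m with hm0 | hm1
      · -- m + 1 = 1
        subst hm0
        have hq : star (x 1) ⬝ᵥ (R₁ *ᵥ x 1) = 0 := by
          have := hquad J₁ R₁ hJ₁ hR₁.isHermitian.eq (x 1) (x 1)
          rw [← hA, hfirst] at this
          simp at this
          rw [← this]
        constructor
        · intro j hj1 hj2
          have : j = 1 := by omega
          subst this
          exact (hR₁.dotProduct_mulVec_zero_iff (x 1)).mp hq
        · intro j hj1 hj2; omega
      · obtain ⟨h1, h2⟩ := ih hm1 (by omega)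
        -- first: R₂ *ᵥ x m = 0
        have hR2m : R₂ *ᵥ x m = 0 := by
          have hs : star (x m) ⬝ᵥ (B *ᵥ x m) = 0 :=
            shift m hm1 h1 h2 m hm1 (by omega)
          have := hquad J₂ R₂ hJ₂ hR₂.isHermitian.eq (x m) (x m)
          rw [← hB, hs] at this
          simp at this
          exact (hR₂.dotProduct_mulVec_zero_iff (x m)).mp (by rw [← this])
        -- then: R₁ *ᵥ x (m+1) = 0
        have hR1m1 : R₁ *ᵥ x (m + 1) = 0 := by
          have hAB : A *ᵥ x (m + 1) = B *ᵥ x m := hchain m hm1 (by omega)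
          have hq : star (x (m + 1)) ⬝ᵥ (A *ᵥ x (m + 1)) = 0 := by
            have hb : B *ᵥ x m = -(Bᴴ *ᵥ x m) := by
              rw [hBstar _ hR2m, neg_neg]
            have hstar : star (star (x (m + 1)) ⬝ᵥ (A *ᵥ x (m + 1))) = 0 := by
              rw [hAB, hconj, hmove Bᴴ, conjTranspose_conjTranspose, hb]
              rw [star_neg, neg_dotProduct, neg_eq_zero, ← hmove]
              exact shift m hm1 h1 h2 (m + 1) (by omega) (by omega)
            calc star (x (m + 1)) ⬝ᵥ (A *ᵥ x (m + 1))
                = star (star (star (x (m + 1)) ⬝ᵥ (A *ᵥ x (m + 1)))) := by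
                  rw [star_star]
              _ = 0 := by rw [hstar, star_zero]
          have := hquad J₁ R₁ hJ₁ hR₁.isHermitian.eq (x (m + 1)) (x (m + 1))
          rw [← hA, hq] at this
          simp at this
          exact (hR₁.dotProduct_mulVec_zero_iff (x (m + 1))).mp (by rw [← this])
        constructor
        · intro j hj1 hj2
          rcases Nat.lt_or_ge j (m + 1) with h | h
          · exact h1 j hj1 (by omega)
          · have : j = m + 1 := by omega
            subst this; exact hR1m1
        · intro j hj1 hj2
          rcases Nat.lt_or_ge j m with h | h
          · exact h2 j hj1 (by omega)
          · have : j = m := by omega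
            subst this; exact hR2m
  -- assemble
  have hκ1 : 1 ≤ (k + 1) / 2 := by omega
  have hκ2 : 2 * ((k + 1) / 2) ≤ k + 1 := by omega
  obtain ⟨h1, h2⟩ := key ((k + 1) / 2) hκ1 hκ2
  refine ⟨h1, fun j hj1 hj2 => h2 j hj1 (by omega), ?_⟩
  intro hke
  set κ := (k + 1) / 2 with hκ
  have hs : star (x κ) ⬝ᵥ (B *ᵥ x κ) = 0 :=
    shift κ hκ1 h1 (fun j' a b => h2 j' a b) κ hκ1 (by omega)
  have := hquad J₂ R₂ hJ₂ hR₂.isHermitian.eq (x κ) (x κ)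
  rw [← hB, hs] at this
  simp at this
  exact (hR₂.dotProduct_mulVec_zero_iff (x κ)).mp (by rw [← this])
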